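/- Let G be a finite abelian group, B₀ ⊆ G nonempty, k ∈ ℕ, and B₁ ⊆ G nonempty with μ_G(B₀ + k·B₁) ≤ 2·μ_G(B₀). Define the probability measure μ := μ_{B₀ + k·B₁} ∗ μ_{−B₁} ∗ ⋯ ∗ μ_{−B₁} (k copies of μ_{−B₁}). Then for every set E ⊆ B₀ we have (1/2)·μ_{B₀}(E) ≤ μ(E) ≤ μ_{B₀}(E). -/
import Mathlib


open scoped Classical Pointwise

/-- Convolution of densities of measures on a finite abelian group. -/
def mconv {G : Type*} [AddCommGroup G] [Fintype G] (f g : G → ℝ) : G → ℝ :=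
  fun x => ∑ y : G, f (x - y) * g y

/-- `k`-fold convolution power of a density (the `0`-th power is the point mass at `0`). -/
noncomputable def iterConv {G : Type*} [AddCommGroup G] [Fintype G] (f : G → ℝ) : ℕ → G → ℝ
  | 0 => fun x => if x = 0 then 1 else 0
  | n + 1 => mconv f (iterConv f n)

/-- `k`-fold iterated sumset `k·B = B + ⋯ + B`. -/
def iterSumset {G : Type*} [AddCommGroup G] (s : Set G) : ℕ → Set G
  | 0 => {0}
  | n + 1 => s + iterSumset s n

/-- Density of the uniform probability measure on a set. -/
noncomputable def unifDensity {G : Type*} [AddCommGroup G] [Fintype G] (S : Set G) : G → ℝ :=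
  fun x => if x ∈ S then (Nat.card S : ℝ)⁻¹ else 0

section Aux

variable {G : Type*} [AddCommGroup G] [Fintype G]

lemma unifDensity_nonneg (S : Set G) (x : G) : 0 ≤ unifDensity S x := by
  unfold unifDensity
  split <;> positivity

lemma natCard_set_eq_ncard (S : Set G) : Nat.card S = S.ncard :=
  Nat.card_coe_set_eq S

lemma sum_ite_const (E : Set G) (c : ℝ) :
    (∑ x : G, if x ∈ E then c else 0) = (E.ncard : ℝ) * c := by
  classical
  have hfe : Finset.univ.filter (· ∈ E) = E.toFinset := by
    ext x; simp
  rw [← Finset.sum_filter, Finset.sum_const, nsmul_eq_mul, hfe,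
    Set.ncard_eq_toFinset_card']

lemma sum_unifDensity (S : Set G) (hS : S.Nonempty) : ∑ x : G, unifDensity S x = 1 := by
  unfold unifDensity
  rw [sum_ite_const]
  rw [natCard_set_eq_ncard]
  have h : (0:ℝ) < S.ncard := by
    exact_mod_cast (Set.ncard_pos S.toFinite).2 hS
  field_simp

lemma sum_mconv (f g : G → ℝ) :
    ∑ x : G, mconv f g x = (∑ x : G, f x) * (∑ x : G, g x) := by
  unfold mconv
  rw [Finset.sum_comm]
  have h : ∀ y : G, ∑ x : G, f (x - y) * g y = (∑ x : G, f x) * g y := by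
    intro y
    rw [← Finset.sum_mul]
    congr 1
    exact Fintype.sum_equiv (Equiv.subRight y) (fun x => f (x - y)) f (fun x => rfl)
  rw [Finset.sum_congr rfl fun y _ => h y, ← Finset.mul_sum]

lemma iterConv_nonneg {f : G → ℝ} (hf : ∀ x, 0 ≤ f x) (k : ℕ) (x : G) :
    0 ≤ iterConv f k x := by
  induction k generalizing x with
  | zero => unfold iterConv; split <;> norm_num
  | succ n ih =>
    unfold iterConv mconv
    exact Finset.sum_nonneg fun y _ => mul_nonneg (hf _) (ih _)

lemma sum_iterConv {f : G → ℝ} (hf : ∑ x : G, f x = 1) (k : ℕ) :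
    ∑ x : G, iterConv f k x = 1 := by
  induction k with
  | zero =>
    unfold iterConv
    simp
  | succ n ih =>
    unfold iterConv
    rw [sum_mconv, hf, ih, one_mul]

lemma iterConv_support {f : G → ℝ} {s : Set G} (hs : ∀ x, f x ≠ 0 → x ∈ s) (k : ℕ)
    {y : G} (hy : iterConv f k y ≠ 0) : y ∈ iterSumset s k := by
  induction k generalizing y with
  | zero =>
    unfold iterConv at hy
    by_cases h : y = 0
    · subst h; exact rfl
    · simp [h] at hy
  | succ n ih =>
    unfold iterConv mconv at hy
    obtain ⟨z, _, hz⟩ := Finset.exists_ne_zero_of_sum_ne_zero hy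
    have h1 : f (y - z) ≠ 0 := fun h => hz (by rw [h, zero_mul])
    have h2 : iterConv f n z ≠ 0 := fun h => hz (by rw [h, mul_zero])
    exact ⟨y - z, hs _ h1, z, ih h2, sub_add_cancel y z⟩

lemma iterSumset_nonempty {s : Set G} (hs : s.Nonempty) (k : ℕ) :
    (iterSumset s k).Nonempty := by
  induction k with
  | zero => exact ⟨0, rfl⟩
  | succ n ih =>
    obtain ⟨a, ha⟩ := hs
    obtain ⟨b, hb⟩ := ih
    exact ⟨a + b, a, ha, b, hb, rfl⟩

lemma neg_mem_iterSumset {s : Set G} (k : ℕ) {y : G} (hy : y ∈ iterSumset (-s) k) :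
    -y ∈ iterSumset s k := by
  induction k generalizing y with
  | zero => simp only [iterSumset, Set.mem_singleton_iff] at hy ⊢; simp [hy]
  | succ n ih =>
    obtain ⟨a, ha, b, hb, rfl⟩ := hy
    exact ⟨-a, ha, -b, ih hb, (neg_add a b).symm⟩

end Aux

/-- If `μ_G(B₀ + k·B₁) ≤ 2μ_G(B₀)` and `μ := μ_{B₀+k·B₁} ∗ μ_{−B₁}^{∗k}`, then
`(1/2)·μ_{B₀}(E) ≤ μ(E) ≤ μ_{B₀}(E)` for every `E ⊆ B₀`. -/
theorem measure_comparison {G : Type} [AddCommGroup G] [Fintype G]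
    (B₀ B₁ : Set G) (h₀ : B₀.Nonempty) (h₁ : B₁.Nonempty) (k : ℕ)
    (hcard : (Nat.card (B₀ + iterSumset B₁ k) : ℝ) / Fintype.card G ≤
      2 * ((Nat.card B₀ : ℝ) / Fintype.card G)) :
    ∀ E : Set G, E ⊆ B₀ →
      (1 / 2) * ((Nat.card E : ℝ) / Nat.card B₀) ≤
        (∑ x : G, if x ∈ E then
          mconv (unifDensity (B₀ + iterSumset B₁ k)) (iterConv (unifDensity (-B₁)) k) x
          else 0) ∧
      (∑ x : G, if x ∈ E then
          mconv (unifDensity (B₀ + iterSumset B₁ k)) (iterConv (unifDensity (-B₁)) k) x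
          else 0) ≤ (Nat.card E : ℝ) / Nat.card B₀ := by
  intro E hE
  set S : Set G := B₀ + iterSumset B₁ k with hSdef
  have hSne : S.Nonempty := h₀.add (iterSumset_nonempty h₁ k)
  -- notation for the iterated convolution
  set ν : G → ℝ := iterConv (unifDensity (-B₁)) k with hν
  have hνnn : ∀ y, 0 ≤ ν y := iterConv_nonneg (unifDensity_nonneg _) k
  have hνsum : ∑ y : G, ν y = 1 :=
    sum_iterConv (sum_unifDensity (-B₁) h₁.neg) k
  have hνsupp : ∀ y : G, ν y ≠ 0 → y ∈ iterSumset (-B₁) k := by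
    intro y hy
    refine iterConv_support (fun x hx => ?_) k hy
    unfold unifDensity at hx
    by_contra h
    simp [h] at hx
  -- for x ∈ B₀ the convolution is constant = (Nat.card S)⁻¹
  have hconst : ∀ x ∈ B₀,
      mconv (unifDensity S) ν x = (Nat.card S : ℝ)⁻¹ := by
    intro x hx
    unfold mconv
    have : ∀ y : G, unifDensity S (x - y) * ν y = (Nat.card S : ℝ)⁻¹ * ν y := by
      intro y
      by_cases hy : ν y = 0
      · rw [hy, mul_zero, mul_zero]
      · have hmem : x - y ∈ S := by
          have := neg_mem_iterSumset k (hνsupp y hy)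
          exact ⟨x, hx, -y, this, (sub_eq_add_neg x y).symm⟩
        unfold unifDensity
        rw [if_pos hmem]
    rw [Finset.sum_congr rfl fun y _ => this y, ← Finset.mul_sum, hνsum, mul_one]
  -- rewrite the sum over E
  have hsum : (∑ x : G, if x ∈ E then mconv (unifDensity S) ν x else 0)
      = (E.ncard : ℝ) * (Nat.card S : ℝ)⁻¹ := by
    rw [← sum_ite_const E ((Nat.card S : ℝ)⁻¹)]
    refine Finset.sum_congr rfl fun x _ => ?_
    by_cases hx : x ∈ E
    · rw [if_pos hx, if_pos hx, hconst x (hE hx)]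
    · rw [if_neg hx, if_neg hx]
  rw [hsum]
  -- cardinality facts
  have hb0 : (0:ℝ) < (Nat.card B₀ : ℝ) := by
    rw [natCard_set_eq_ncard]
    exact_mod_cast (Set.ncard_pos B₀.toFinite).2 h₀
  have hS0 : (0:ℝ) < (Nat.card S : ℝ) := by
    rw [natCard_set_eq_ncard]
    exact_mod_cast (Set.ncard_pos S.toFinite).2 hSne
  have hG0 : (0:ℝ) < (Fintype.card G : ℝ) := by
    exact_mod_cast Fintype.card_pos
  -- |S| ≤ 2 |B₀|
  have hS2 : (Nat.card S : ℝ) ≤ 2 * (Nat.card B₀ : ℝ) := by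
    have := hcard
    rw [← mul_div_assoc] at this
    exact (div_le_div_iff_of_pos_right hG0).1 this
  -- |B₀| ≤ |S|
  have hBS : (Nat.card B₀ : ℝ) ≤ (Nat.card S : ℝ) := by
    obtain ⟨b, hb⟩ := iterSumset_nonempty h₁ k
    have hsub : (fun x => x + b) '' B₀ ⊆ S := by
      rintro _ ⟨x, hx, rfl⟩
      exact ⟨x, hx, b, hb, rfl⟩
    have h1 : ((fun x => x + b) '' B₀).ncard = B₀.ncard :=
      Set.ncard_image_of_injective _ (add_left_injective b)
    have h2 := Set.ncard_le_ncard hsub S.toFinite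
    rw [h1] at h2
    rw [natCard_set_eq_ncard, natCard_set_eq_ncard]
    exact_mod_cast h2
  have hEnn : (0:ℝ) ≤ (E.ncard : ℝ) := by positivity
  have hEeq : (Nat.card E : ℝ) = (E.ncard : ℝ) := by rw [natCard_set_eq_ncard]
  have h1 : (E.ncard : ℝ) * ((Nat.card S : ℝ))⁻¹ = (E.ncard : ℝ) / Nat.card S :=
    (div_eq_mul_inv _ _).symm
  rw [hEeq, h1]
  constructor
  · have h2 : (1/2 : ℝ) * ((E.ncard : ℝ) / Nat.card B₀)
        = (E.ncard : ℝ) / (2 * Nat.card B₀) := by ring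
    rw [h2]
    gcongr
  · gcongr
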